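/- arXiv:1605.05168 — 5 statements merged into one kernel-verified Lean document; each statement's English description precedes it below -/
import Mathlib

section
/- Let G be a locally compact Hausdorff group with a left Haar measure μ_G acting continuously and properly on a locally compact Hausdorff space X, and let β be a Bruhat function for the action. Then for every h ∈ C_c(G\X), the function x ↦ β(x)·h(π(x)) belongs to C_c(X) and its orbital mean equals h: ∫_G β(g⁻¹•x)·h(π(g⁻¹•x)) dμ_G(g) = h(π(x)) for all x ∈ X. In particular, the orbital mean operator A : C_c(X) → C_c(G\X), (A f)(π(x)) = ∫_G f(g⁻¹•x) dμ_G(g), is surjective. -/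
open MeasureTheory
open scoped Pointwise

lemma compact_lift {X Q : Type*} [TopologicalSpace X] [TopologicalSpace Q]
    [LocallyCompactSpace X] (π : X → Q) (hc : Continuous π) (ho : IsOpenMap π)
    (hs : Function.Surjective π) {K : Set Q} (hK : IsCompact K) :
    ∃ C : Set X, IsCompact C ∧ K ⊆ π '' C := by
  choose x hx using hs
  choose V hVc hVn using fun q : Q => exists_compact_mem_nhds (x q)
  obtain ⟨t, ht⟩ := hK.elim_nhds_subcover (fun q => π '' V q)
    (fun q _ => by simpa [hx q] using ho.image_mem_nhds (hVn q))
  refine ⟨⋃ q ∈ t, V q, t.isCompact_biUnion (fun q _ => hVc q), ?_⟩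
  refine ht.2.trans ?_
  rw [Set.image_iUnion₂]

/-- Let `G` be a locally compact Hausdorff group with a left Haar
measure `μG` acting continuously and properly on a locally compact Hausdorff space `X`,
and let `β` be a Bruhat function for the action.  Then for every `h ∈ C_c(G\X)`, the
function `x ↦ β x · h (π x)` belongs to `C_c(X)` and its orbital mean equals `h`:
`∫ β (g⁻¹ • x) · h (π (g⁻¹ • x)) dμG(g) = h (π x)` for all `x`.  In particular, the
orbital mean operator `A : C_c(X) → C_c(G\X)` is surjective. -/
theorem stmt_5 {G X : Type*}
    [Group G] [TopologicalSpace G] [IsTopologicalGroup G] [LocallyCompactSpace G] [T2Space G]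
    [MeasurableSpace G] [BorelSpace G]
    (μG : Measure G) [μG.IsHaarMeasure]
    [TopologicalSpace X] [LocallyCompactSpace X] [T2Space X]
    [MulAction G X] [ContinuousSMul G X]
    (hproper : ∀ A B : Set X, IsCompact A → IsCompact B →
      IsCompact {g : G | (g • A) ∩ B ≠ ∅})
    (β : X → ℝ) (hβcont : Continuous β)
    (hβmean : ∀ x : X, (∫ g, β (g⁻¹ • x) ∂μG) = 1)
    (hβcomp : ∀ C : Set X, IsCompact C →
      (∀ y ∈ {y : X | ∃ g : G, ∃ c ∈ C, y = g • c}, 0 ≤ β y) ∧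
      IsCompact (tsupport β ∩ {y : X | ∃ g : G, ∃ c ∈ C, y = g • c})) :
    (∀ h : Quotient (MulAction.orbitRel G X) → ℂ, Continuous h → HasCompactSupport h →
      Continuous (fun x : X => (β x : ℂ) * h (Quotient.mk (MulAction.orbitRel G X) x)) ∧
      HasCompactSupport
        (fun x : X => (β x : ℂ) * h (Quotient.mk (MulAction.orbitRel G X) x)) ∧
      ∀ x : X,
        (∫ g, (β (g⁻¹ • x) : ℂ) * h (Quotient.mk (MulAction.orbitRel G X) (g⁻¹ • x)) ∂μG)
          = h (Quotient.mk (MulAction.orbitRel G X) x)) ∧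
    (∀ h : Quotient (MulAction.orbitRel G X) → ℂ, Continuous h → HasCompactSupport h →
      ∃ f : X → ℂ, Continuous f ∧ HasCompactSupport f ∧
        ∀ x : X, (∫ g, f (g⁻¹ • x) ∂μG) = h (Quotient.mk (MulAction.orbitRel G X) x)) := by
  set π : X → Quotient (MulAction.orbitRel G X) := Quotient.mk (MulAction.orbitRel G X) with hπ
  have hπc : Continuous π := continuous_quot_mk
  have hπo : IsOpenMap π := isOpenMap_quotient_mk'_mul
  have hπs : Function.Surjective π := Quot.mk_surjective
  have key : ∀ (g : G) (x : X), π (g⁻¹ • x) = π x := fun g x =>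
    Quotient.sound (MulAction.mem_orbit x g⁻¹)
  have main : ∀ h : Quotient (MulAction.orbitRel G X) → ℂ, Continuous h → HasCompactSupport h →
      Continuous (fun x : X => (β x : ℂ) * h (π x)) ∧
      HasCompactSupport (fun x : X => (β x : ℂ) * h (π x)) ∧
      ∀ x : X, (∫ g, (β (g⁻¹ • x) : ℂ) * h (π (g⁻¹ • x)) ∂μG) = h (π x) := by
    intro h hhc hhs
    have hcont : Continuous (fun x : X => (β x : ℂ) * h (π x)) :=
      (Complex.continuous_ofReal.comp hβcont).mul (hhc.comp hπc)
    refine ⟨hcont, ?_, ?_⟩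
    · obtain ⟨C, hC, hKC⟩ := compact_lift π hπc hπo hπs hhs
      obtain ⟨-, hcomp⟩ := hβcomp C hC
      refine HasCompactSupport.intro hcomp ?_
      intro x hxS
      by_contra hne
      apply hxS
      have hβx : β x ≠ 0 := fun h0 => hne (by simp [h0])
      have hhx : h (π x) ≠ 0 := fun h0 => hne (by simp [h0])
      constructor
      · exact subset_tsupport β hβx
      · have : π x ∈ π '' C := hKC (subset_tsupport h hhx)
        obtain ⟨c, hcC, hcx⟩ := this
        have : c ∈ MulAction.orbit G x := Quotient.exact hcx
        obtain ⟨g, hg⟩ := this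
        exact ⟨g⁻¹, c, hcC, by rw [← hg, inv_smul_smul]⟩
    · intro x
      simp_rw [key]
      have h1 : (∫ a : G, (β (a⁻¹ • x) : ℂ) ∂μG) = 1 := by
        rw [← Complex.ofReal_one, ← hβmean x]
        exact integral_ofReal
      rw [integral_mul_const, h1, one_mul]
  refine ⟨main, fun h hhc hhs => ?_⟩
  obtain ⟨hc, hs, hint⟩ := main h hhc hhs
  exact ⟨fun x => (β x : ℂ) * h (π x), hc, hs, hint⟩
end

section
/- Let G be a locally compact Hausdorff group with left Haar measure μ_G and modular function Δ, acting continuously and properly on a locally compact Hausdorff space X. Let β be a Bruhat function for the action, and let λ : G × X → (0,∞), (g,x) ↦ λ_g(x), be continuous and satisfy the cocycle identity λ_{gh}(x) = λ_g(h•x)·λ_h(x) for all g,h ∈ G and x ∈ X. Then q(x) := ∫_G β(g⁻¹•x)·λ_{g⁻¹}(x)·Δ(g)⁻¹ dμ_G(g) defines a strictly positive function on X (the integral converges), and q satisfies the functional equation q(h⁻¹•x)·λ_{h⁻¹}(x) = Δ(h)·q(x) for all h ∈ G and x ∈ X. -/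
open MeasureTheory
open scoped Pointwise

/-- Let `G` be a locally compact Hausdorff group with left Haar measure
`μG` and modular function `Δ`, acting continuously and properly on a locally compact
Hausdorff space `X`.  Let `β` be a Bruhat function for the action and let
`lam : G × X → (0,∞)` be continuous with the cocycle identity
`lam (g*h) x = lam g (h • x) · lam h x`.  Then
`q x := ∫ β (g⁻¹ • x) · lam g⁻¹ x · (Δ g)⁻¹ dμG(g)` is well defined (the integrand is
integrable), strictly positive, and satisfies
`q (h⁻¹ • x) · lam h⁻¹ x = Δ h · q x` for all `h ∈ G`, `x ∈ X`. -/
theorem stmt_6 {G X : Type*}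
    [Group G] [TopologicalSpace G] [IsTopologicalGroup G] [LocallyCompactSpace G] [T2Space G]
    [MeasurableSpace G] [BorelSpace G]
    (μG : Measure G) [μG.IsHaarMeasure]
    [TopologicalSpace X] [LocallyCompactSpace X] [T2Space X]
    [MulAction G X] [ContinuousSMul G X]
    (hproper : ∀ A B : Set X, IsCompact A → IsCompact B →
      IsCompact {g : G | (g • A) ∩ B ≠ ∅})
    (Δ : G → ℝ) (hΔpos : ∀ g, 0 < Δ g) (hΔcont : Continuous Δ)
    (hΔmul : ∀ g h : G, Δ (g * h) = Δ g * Δ h)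
    (hΔmod : ∀ f : G → ℂ, Continuous f → HasCompactSupport f → ∀ h : G,
      (∫ g, f (g * h) ∂μG) = ((Δ h : ℂ))⁻¹ * ∫ g, f g ∂μG)
    (β : X → ℝ) (hβcont : Continuous β)
    (hβmean : ∀ x : X, (∫ g, β (g⁻¹ • x) ∂μG) = 1)
    (hβcomp : ∀ C : Set X, IsCompact C →
      (∀ y ∈ {y : X | ∃ g : G, ∃ c ∈ C, y = g • c}, 0 ≤ β y) ∧
      IsCompact (tsupport β ∩ {y : X | ∃ g : G, ∃ c ∈ C, y = g • c}))
    (lam : G → X → ℝ) (hlampos : ∀ g x, 0 < lam g x)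
    (hlamcont : Continuous (fun p : G × X => lam p.1 p.2))
    (hcocycle : ∀ (g h : G) (x : X), lam (g * h) x = lam g (h • x) * lam h x) :
    (∀ x : X, Integrable (fun g : G => β (g⁻¹ • x) * lam g⁻¹ x * (Δ g)⁻¹) μG) ∧
    (∀ x : X, 0 < ∫ g, β (g⁻¹ • x) * lam g⁻¹ x * (Δ g)⁻¹ ∂μG) ∧
    (∀ (h : G) (x : X),
      (∫ g, β (g⁻¹ • (h⁻¹ • x)) * lam g⁻¹ (h⁻¹ • x) * (Δ g)⁻¹ ∂μG) * lam h⁻¹ x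
        = Δ h * ∫ g, β (g⁻¹ • x) * lam g⁻¹ x * (Δ g)⁻¹ ∂μG) := by
  -- the base function `g ↦ β (g⁻¹ • x)` has compact support
  have hsupp : ∀ x : X, HasCompactSupport (fun g : G => β (g⁻¹ • x)) := by
    intro x
    obtain ⟨hpos, hK⟩ := hβcomp {x} isCompact_singleton
    set K := tsupport β ∩ {y : X | ∃ g : G, ∃ c ∈ ({x} : Set X), y = g • c} with hKdef
    have hS : IsCompact {g : G | (g • ({x} : Set X)) ∩ K ≠ ∅} :=
      hproper {x} K isCompact_singleton hK
    refine HasCompactSupport.intro hS.inv ?_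
    intro g hg
    by_contra hne
    apply hg
    rw [Set.mem_inv]
    show (g⁻¹ • ({x} : Set X)) ∩ K ≠ ∅
    rw [← Set.nonempty_iff_ne_empty]
    refine ⟨g⁻¹ • x, ?_, ?_⟩
    · exact ⟨x, rfl, rfl⟩
    · exact ⟨subset_tsupport β hne, g⁻¹, x, rfl, rfl⟩
  have hcontb : ∀ x : X, Continuous (fun g : G => β (g⁻¹ • x)) := by
    intro x
    exact hβcont.comp ((continuous_inv.smul continuous_const))
  have hcontf : ∀ x : X,
      Continuous (fun g : G => β (g⁻¹ • x) * lam g⁻¹ x * (Δ g)⁻¹) := by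
    intro x
    refine ((hcontb x).mul ?_).mul (hΔcont.inv₀ fun g => (hΔpos g).ne')
    exact hlamcont.comp (continuous_inv.prodMk continuous_const)
  have hsuppf : ∀ x : X,
      HasCompactSupport (fun g : G => β (g⁻¹ • x) * lam g⁻¹ x * (Δ g)⁻¹) := by
    intro x
    have : (fun g : G => β (g⁻¹ • x) * lam g⁻¹ x * (Δ g)⁻¹)
        = (fun g : G => β (g⁻¹ • x)) * (fun g : G => lam g⁻¹ x * (Δ g)⁻¹) := by
      funext g; simp [mul_assoc]
    rw [this]
    exact (hsupp x).mul_right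
  have hint : ∀ x : X, Integrable (fun g : G => β (g⁻¹ • x) * lam g⁻¹ x * (Δ g)⁻¹) μG :=
    fun x => (hcontf x).integrable_of_hasCompactSupport (hsuppf x)
  have hnonneg : ∀ (x : X) (g : G), 0 ≤ β (g⁻¹ • x) * lam g⁻¹ x * (Δ g)⁻¹ := by
    intro x g
    obtain ⟨hpos, _⟩ := hβcomp {x} isCompact_singleton
    have hb : 0 ≤ β (g⁻¹ • x) := hpos _ ⟨g⁻¹, x, rfl, rfl⟩
    exact mul_nonneg (mul_nonneg hb (hlampos g⁻¹ x).le) (inv_nonneg.2 (hΔpos g).le)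
  refine ⟨hint, ?_, ?_⟩
  · -- strict positivity
    intro x
    rcases lt_or_eq_of_le (integral_nonneg (μ := μG) (f := fun g : G => β (g⁻¹ • x) * lam g⁻¹ x * (Δ g)⁻¹) (hnonneg x)) with hlt | heq
    · exact hlt
    · exfalso
      have hz := (integral_eq_zero_iff_of_nonneg (hnonneg x) (hint x)).1 heq.symm
      have hbz : (fun g : G => β (g⁻¹ • x)) =ᵐ[μG] 0 := by
        filter_upwards [hz] with g hg
        have h1 : lam g⁻¹ x ≠ 0 := (hlampos g⁻¹ x).ne'
        have h2 : (Δ g)⁻¹ ≠ 0 := inv_ne_zero (hΔpos g).ne'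
        have := hg
        simp only [Pi.zero_apply] at this ⊢
        have := mul_eq_zero.1 this
        rcases this with h | h
        · rcases mul_eq_zero.1 h with h' | h'
          · exact h'
          · exact absurd h' h1
        · exact absurd h h2
      have : (∫ g, β (g⁻¹ • x) ∂μG) = 0 := by
        rw [integral_congr_ae hbz]; simp
      rw [hβmean x] at this
      exact one_ne_zero this
  · -- functional equation
    intro h x
    have key : ∀ g : G,
        β (g⁻¹ • (h⁻¹ • x)) * lam g⁻¹ (h⁻¹ • x) * (Δ g)⁻¹ * lam h⁻¹ x
          = Δ h * (β ((h * g)⁻¹ • x) * lam (h * g)⁻¹ x * (Δ (h * g))⁻¹) := by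
      intro g
      have h1 : g⁻¹ • (h⁻¹ • x) = (h * g)⁻¹ • x := by
        rw [mul_inv_rev, mul_smul]
      have h2 : lam (h * g)⁻¹ x = lam g⁻¹ (h⁻¹ • x) * lam h⁻¹ x := by
        rw [mul_inv_rev]; exact hcocycle g⁻¹ h⁻¹ x
      have h3 : Δ (h * g) = Δ h * Δ g := hΔmul h g
      rw [h1, h2, h3, mul_inv]
      have hΔh : Δ h ≠ 0 := (hΔpos h).ne'
      field_simp
    calc (∫ g, β (g⁻¹ • (h⁻¹ • x)) * lam g⁻¹ (h⁻¹ • x) * (Δ g)⁻¹ ∂μG) * lam h⁻¹ x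
        = ∫ g, β (g⁻¹ • (h⁻¹ • x)) * lam g⁻¹ (h⁻¹ • x) * (Δ g)⁻¹ * lam h⁻¹ x ∂μG := by
          rw [integral_mul_const]
      _ = ∫ g, Δ h * (β ((h * g)⁻¹ • x) * lam (h * g)⁻¹ x * (Δ (h * g))⁻¹) ∂μG := by
          exact integral_congr_ae (Filter.Eventually.of_forall key)
      _ = Δ h * ∫ g, β ((h * g)⁻¹ • x) * lam (h * g)⁻¹ x * (Δ (h * g))⁻¹ ∂μG := by
          rw [integral_const_mul]
      _ = Δ h * ∫ g, β (g⁻¹ • x) * lam g⁻¹ x * (Δ g)⁻¹ ∂μG := by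
          rw [integral_mul_left_eq_self (fun g : G => β (g⁻¹ • x) * lam g⁻¹ x * (Δ g)⁻¹) h]
end

section
/- Let G be a second countable locally compact abelian group with Haar measure μ_G acting continuously on a second countable locally compact Hausdorff space X. Let Ĝ denote the set of continuous characters χ : G → 𝕋, and let ν_Ĝ be a measure on Ĝ satisfying the Plancherel identity: ∫_Ĝ |ĥ(χ)|² dν_Ĝ(χ) = ∫_G |h|² dμ_G for all h ∈ L¹(G, μ_G) ∩ L²(G, μ_G), where ĥ(χ) = ∫_G h(g)·conj(χ(g)) dμ_G(g). Let μ# be a Radon measure on X and ν a Radon measure on the orbit space G\X satisfying the extended Weil formula: for every non-negative Borel function h on X, ∫_X h dμ# = ∫_{G\X} H dν, where H is induced by the G-invariant function x ↦ ∫_G h(g⁻¹•x) dμ_G(g). Then for every f ∈ L¹(X, μ#) ∩ L²(X, μ#): ∫_X |f|² dμ# = ∫_{G\X} (∫_Ĝ |Z f(x,χ)|² dν_Ĝ(χ)) dν, where Z f(x,χ) = ∫_G f(g⁻¹•x)·conj(χ(g)) dμ_G(g) and the inner integral ∫_Ĝ |Z f(x,χ)|² dν_Ĝ(χ) is constant along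 each orbit. -/
open MeasureTheory
open scoped ENNReal

/-- The set `Ĝ` of continuous characters of `G`: continuous multiplicative maps from `G`
into the circle group `𝕋 ⊆ ℂ`. -/
abbrev ContChar (G : Type*) [Group G] [TopologicalSpace G] :=
  {χ : G → ℂ // Continuous χ ∧ (∀ g, ‖χ g‖ = 1) ∧ ∀ g h : G, χ (g * h) = χ g * χ h}

/-- **Isometry property of the abelian Zak transform.**  Let `G` be a
second countable locally compact abelian group with Haar measure `μG` acting continuously
on a second countable locally compact Hausdorff space `X`.  Let `νĜ` be a measure on the
set `Ĝ` of continuous characters satisfying the Plancherel identity, and let `(μ#, ν)`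
satisfy the extended Weil formula.  Then for every `f ∈ L¹(X, μ#) ∩ L²(X, μ#)` the inner
integral `∫_Ĝ |Z f (x, χ)|² dνĜ(χ)` is constant along each orbit and
`∫_X |f|² dμ# = ∫_{G\X} (∫_Ĝ |Z f (x, χ)|² dνĜ(χ)) dν`, where
`Z f (x, χ) = ∫_G f (g⁻¹ • x) · conj (χ g) dμG(g)`. -/
theorem stmt_10 {G X : Type*}
    [CommGroup G] [TopologicalSpace G] [IsTopologicalGroup G] [LocallyCompactSpace G]
    [T2Space G] [SecondCountableTopology G] [MeasurableSpace G] [BorelSpace G]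
    (μG : Measure G) [μG.IsHaarMeasure]
    [TopologicalSpace X] [LocallyCompactSpace X] [T2Space X] [SecondCountableTopology X]
    [MulAction G X] [ContinuousSMul G X]
    [MeasurableSpace X] [BorelSpace X]
    (νhat : Measure (ContChar G))
    (hPlancherel : ∀ h : G → ℂ, Integrable h μG → MemLp h 2 μG →
      (∫ χ : ContChar G, ‖∫ g, h g * (starRingEnd ℂ) (χ.1 g) ∂μG‖ ^ 2 ∂νhat)
        = ∫ g, ‖h g‖ ^ 2 ∂μG)
    (μs : Measure X) (ν : Measure (Quotient (MulAction.orbitRel G X)))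
    (hWeil : ∀ h : X → ℝ≥0∞, Measurable h →
      ∀ H : Quotient (MulAction.orbitRel G X) → ℝ≥0∞,
        (∀ x : X, H (Quotient.mk (MulAction.orbitRel G X) x) = ∫⁻ g, h (g⁻¹ • x) ∂μG) →
        (∫⁻ x, h x ∂μs) = ∫⁻ ξ, H ξ ∂ν) :
    ∀ f : X → ℂ, Integrable f μs → MemLp f 2 μs →
      (∀ (g : G) (x : X),
        (∫ χ : ContChar G,
            ‖∫ g', f (g'⁻¹ • (g⁻¹ • x)) * (starRingEnd ℂ) (χ.1 g') ∂μG‖ ^ 2 ∂νhat)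
          = ∫ χ : ContChar G,
              ‖∫ g', f (g'⁻¹ • x) * (starRingEnd ℂ) (χ.1 g') ∂μG‖ ^ 2 ∂νhat) ∧
      (∀ F : Quotient (MulAction.orbitRel G X) → ℝ,
        (∀ x : X, F (Quotient.mk (MulAction.orbitRel G X) x)
            = ∫ χ : ContChar G,
                ‖∫ g, f (g⁻¹ • x) * (starRingEnd ℂ) (χ.1 g) ∂μG‖ ^ 2 ∂νhat) →
        (∫ x, ‖f x‖ ^ 2 ∂μs) = ∫ ξ, F ξ ∂ν) := by
  intro f hfi hf2
  -- basic facts about characters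
  have hχone : ∀ χ : ContChar G, χ.1 1 = 1 := by
    intro χ
    have h1 : χ.1 1 = χ.1 1 * χ.1 1 := by
      have := χ.2.2.2 1 1; rwa [one_mul] at this
    have hne : χ.1 1 ≠ 0 := by
      intro h0
      have := χ.2.2.1 1
      rw [h0] at this; simp at this
    have := mul_left_cancel₀ hne (by rw [mul_one]; exact h1.symm :
      χ.1 1 * χ.1 1 = χ.1 1 * 1)
    exact this
  have hχinv : ∀ (χ : ContChar G) (g : G),
      (starRingEnd ℂ) (χ.1 g⁻¹) * (starRingEnd ℂ) (χ.1 g) = 1 := by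
    intro χ g
    rw [← map_mul, ← χ.2.2.2, inv_mul_cancel, hχone]
    simp
  constructor
  · -- Part 1: invariance of the inner integral along orbits
    intro g x
    have hfun : (fun χ : ContChar G =>
        ‖∫ g', f (g'⁻¹ • (g⁻¹ • x)) * (starRingEnd ℂ) (χ.1 g') ∂μG‖ ^ 2)
        = fun χ : ContChar G =>
        ‖∫ g', f (g'⁻¹ • x) * (starRingEnd ℂ) (χ.1 g') ∂μG‖ ^ 2 := by
      funext χ
      have key : (∫ g', f (g'⁻¹ • (g⁻¹ • x)) * (starRingEnd ℂ) (χ.1 g') ∂μG)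
          = (starRingEnd ℂ) (χ.1 g⁻¹)
            * ∫ g', f (g'⁻¹ • x) * (starRingEnd ℂ) (χ.1 g') ∂μG := by
        calc (∫ g', f (g'⁻¹ • (g⁻¹ • x)) * (starRingEnd ℂ) (χ.1 g') ∂μG)
            = ∫ g', (fun u => (starRingEnd ℂ) (χ.1 g⁻¹)
                * (f (u⁻¹ • x) * (starRingEnd ℂ) (χ.1 u))) (g * g') ∂μG := by
              refine integral_congr_ae (Filter.Eventually.of_forall fun g' => ?_)
              simp only [smul_smul, mul_inv_rev, χ.2.2.2 g g', map_mul]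
              have h1 := hχinv χ g
              ring_nf
              linear_combination
                (f ((g'⁻¹ * g⁻¹) • x) * (starRingEnd ℂ) (χ.1 g')) * h1.symm
          _ = ∫ u, (starRingEnd ℂ) (χ.1 g⁻¹)
                * (f (u⁻¹ • x) * (starRingEnd ℂ) (χ.1 u)) ∂μG :=
              integral_mul_left_eq_self
                (fun u => (starRingEnd ℂ) (χ.1 g⁻¹)
                  * (f (u⁻¹ • x) * (starRingEnd ℂ) (χ.1 u))) g
          _ = (starRingEnd ℂ) (χ.1 g⁻¹)
                * ∫ g', f (g'⁻¹ • x) * (starRingEnd ℂ) (χ.1 g') ∂μG :=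
              integral_const_mul _ _
      rw [key, norm_mul]
      have : ‖(starRingEnd ℂ) (χ.1 g⁻¹)‖ = 1 := by
        rw [RCLike.norm_conj]; exact χ.2.2.1 g⁻¹
      rw [this, one_mul]
    rw [hfun]
  · -- Part 2: the isometry identity
    intro F hF
    obtain ⟨f', hf'sm, hff'⟩ := hfi.1
    have hf'meas : Measurable f' := hf'sm.measurable
    -- translation invariance of the fiber integrals
    have inv_lint : ∀ (h : X → ℝ≥0∞) (g₀ : G) (x : X),
        (∫⁻ g, h (g⁻¹ • (g₀ • x)) ∂μG) = ∫⁻ g, h (g⁻¹ • x) ∂μG := by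
      intro h g₀ x
      refine ((?_ : (∫⁻ g, h (g⁻¹ • x) ∂μG) = _)).symm
      calc (∫⁻ g, h (g⁻¹ • x) ∂μG)
          = ∫⁻ g, (fun u => h (u⁻¹ • (g₀ • x))) (g₀ * g) ∂μG := by
            refine lintegral_congr fun g => ?_
            simp only [smul_smul, mul_inv_rev, inv_mul_cancel_right]
        _ = ∫⁻ u, h (u⁻¹ • (g₀ • x)) ∂μG :=
            lintegral_mul_left_eq_self (fun u => h (u⁻¹ • (g₀ • x))) g₀
    have inv_rep : ∀ (h : X → ℝ≥0∞) (x : X),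
        (∫⁻ g, h (g⁻¹ • (Quotient.mk (MulAction.orbitRel G X) x).out) ∂μG)
          = ∫⁻ g, h (g⁻¹ • x) ∂μG := by
      intro h x
      obtain ⟨g₀, hg₀⟩ : ∃ g₀ : G,
          g₀ • x = (Quotient.mk (MulAction.orbitRel G X) x).out := by
        have hrel : (MulAction.orbitRel G X)
            ((Quotient.mk (MulAction.orbitRel G X) x).out) x :=
          Quotient.exact (Quotient.out_eq _)
        exact MulAction.mem_orbit_iff.mp (MulAction.orbitRel_apply.mp hrel)
      rw [← hg₀]
      exact inv_lint h g₀ x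
    -- Weil formula with canonical representatives
    have weil : ∀ h : X → ℝ≥0∞, Measurable h →
        (∫⁻ x, h x ∂μs) = ∫⁻ ξ, (∫⁻ g, h (g⁻¹ • ξ.out) ∂μG) ∂ν :=
      fun h hh => hWeil h hh _ (fun x => inv_rep h x)
    -- measurability of the fiber integral on the quotient
    have measH : ∀ h : X → ℝ≥0∞, Measurable h →
        Measurable (fun ξ : Quotient (MulAction.orbitRel G X) =>
          ∫⁻ g, h (g⁻¹ • ξ.out) ∂μG) := by
      intro h hh
      rw [measurable_from_quotient]
      have hcomp : (fun ξ : Quotient (MulAction.orbitRel G X) =>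
          ∫⁻ g, h (g⁻¹ • ξ.out) ∂μG) ∘ Quotient.mk''
          = fun x : X => ∫⁻ g, h (g⁻¹ • x) ∂μG :=
        funext fun x => inv_rep h x
      rw [hcomp]
      have hc : Continuous fun p : X × G => p.2⁻¹ • p.1 :=
        continuous_smul.comp ((continuous_inv.comp continuous_snd).prodMk continuous_fst)
      exact Measurable.lintegral_prod_right
        (f := fun (x : X) (g : G) => h (g⁻¹ • x)) (hh.comp hc.measurable)
    -- the exceptional set where f and f' differ
    set N : Set X := toMeasurable μs {x | f x ≠ f' x} with hN
    have hNmeas : MeasurableSet N := measurableSet_toMeasurable _ _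
    have hNnull : μs N = 0 := by
      rw [hN, measure_toMeasurable]
      exact hff'
    set h₀ : X → ℝ≥0∞ := N.indicator (fun _ => 1) with hh₀
    have hmeas₀ : Measurable h₀ := measurable_const.indicator hNmeas
    set h₁ : X → ℝ≥0∞ := fun x => (‖f' x‖₊ : ℝ≥0∞) with hh₁
    have hmeas₁ : Measurable h₁ := hf'meas.nnnorm.coe_nnreal_ennreal
    set h₂ : X → ℝ≥0∞ := fun x => (‖f' x‖₊ : ℝ≥0∞) ^ 2 with hh₂
    have hmeas₂ : Measurable h₂ := hmeas₁.pow_const 2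
    -- a.e. facts on the quotient
    have hae0 : ∀ᵐ ξ ∂ν, (∫⁻ g, h₀ (g⁻¹ • ξ.out) ∂μG) = 0 := by
      have w0 := weil h₀ hmeas₀
      have hz : (∫⁻ x, h₀ x ∂μs) = 0 := by
        rw [hh₀, lintegral_indicator hNmeas]
        simp [hNnull]
      rw [hz] at w0
      exact (lintegral_eq_zero_iff (measH h₀ hmeas₀)).mp w0.symm
    have hae1 : ∀ᵐ ξ ∂ν, (∫⁻ g, h₁ (g⁻¹ • ξ.out) ∂μG) < ∞ := by
      have w1 := weil h₁ hmeas₁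
      have hfin : (∫⁻ x, h₁ x ∂μs) < ∞ := by
        have : (∫⁻ x, h₁ x ∂μs) = ∫⁻ x, (‖f x‖₊ : ℝ≥0∞) ∂μs := by
          refine lintegral_congr_ae (hff'.mono fun x hx => ?_)
          rw [hh₁]; simp [hx]
        rw [this]
        exact hfi.2
      rw [w1] at hfin
      exact ae_lt_top (measH h₁ hmeas₁) hfin.ne
    have hfsq : (∫⁻ x, (‖f x‖₊ : ℝ≥0∞) ^ 2 ∂μs) < ∞ := by
      have hint := (memLp_two_iff_integrable_sq_norm hfi.1).mp hf2
      have hthis : (∫⁻ x, (‖(‖f x‖ ^ 2 : ℝ)‖₊ : ℝ≥0∞) ∂μs) < ∞ := hint.2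
      refine lt_of_eq_of_lt ?_ hthis
      refine lintegral_congr fun x => ?_
      simp [nnnorm_pow, nnnorm_norm, ENNReal.coe_pow]
    have hae2 : ∀ᵐ ξ ∂ν, (∫⁻ g, h₂ (g⁻¹ • ξ.out) ∂μG) < ∞ := by
      have w2 := weil h₂ hmeas₂
      have hfin : (∫⁻ x, h₂ x ∂μs) < ∞ := by
        have : (∫⁻ x, h₂ x ∂μs) = ∫⁻ x, (‖f x‖₊ : ℝ≥0∞) ^ 2 ∂μs := by
          refine lintegral_congr_ae (hff'.mono fun x hx => ?_)
          rw [hh₂]; simp [hx]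
        rw [this]; exact hfsq
      rw [w2] at hfin
      exact ae_lt_top (measH h₂ hmeas₂) hfin.ne
    -- main pointwise identity on the quotient
    have hmain : ∀ᵐ ξ ∂ν, F ξ = (∫⁻ g, h₂ (g⁻¹ • ξ.out) ∂μG).toReal := by
      filter_upwards [hae0, hae1, hae2] with ξ hξ0 hξ1 hξ2
      set x₀ := ξ.out with hx₀
      have hmg : Measurable fun g : G => g⁻¹ • x₀ :=
        (continuous_inv.smul continuous_const).measurable
      have heqg : (fun g : G => f (g⁻¹ • x₀)) =ᵐ[μG] fun g => f' (g⁻¹ • x₀) := by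
        have h0' := (lintegral_eq_zero_iff (hmeas₀.comp hmg)).mp hξ0
        filter_upwards [h0'] with g hg
        by_contra hne
        have hmem : g⁻¹ • x₀ ∈ N := subset_toMeasurable _ _ hne
        simp only [Function.comp_apply, hh₀, Set.indicator_of_mem hmem,
          Pi.zero_apply] at hg
        exact one_ne_zero hg
      have hmeas_hx : Measurable fun g : G => f' (g⁻¹ • x₀) := hf'meas.comp hmg
      have hint_hx : Integrable (fun g : G => f' (g⁻¹ • x₀)) μG := by
        exact ⟨hmeas_hx.aestronglyMeasurable, hξ1⟩
      have hl2_hx : MemLp (fun g : G => f' (g⁻¹ • x₀)) 2 μG := by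
        rw [memLp_two_iff_integrable_sq_norm hmeas_hx.aestronglyMeasurable]
        refine ⟨(hmeas_hx.norm.pow_const 2).aestronglyMeasurable, ?_⟩
        show (∫⁻ g, (‖(‖f' (g⁻¹ • x₀)‖ ^ 2 : ℝ)‖₊ : ℝ≥0∞) ∂μG) < ∞
        refine lt_of_eq_of_lt ?_ hξ2
        refine lintegral_congr fun g => ?_
        simp only [hh₂]
        simp [nnnorm_pow, nnnorm_norm, ENNReal.coe_pow]
      have hplan := hPlancherel _ hint_hx hl2_hx
      have hZ : (fun χ : ContChar G =>
          ‖∫ g, f (g⁻¹ • x₀) * (starRingEnd ℂ) (χ.1 g) ∂μG‖ ^ 2)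
          = fun χ : ContChar G =>
          ‖∫ g, f' (g⁻¹ • x₀) * (starRingEnd ℂ) (χ.1 g) ∂μG‖ ^ 2 := by
        funext χ
        congr 1
        congr 1
        exact integral_congr_ae (heqg.mono fun g hg =>
          congrArg (fun z => z * (starRingEnd ℂ) (χ.1 g)) hg)
      calc F ξ = F (Quotient.mk (MulAction.orbitRel G X) x₀) := by
            rw [hx₀, Quotient.out_eq]
        _ = ∫ χ : ContChar G,
              ‖∫ g, f (g⁻¹ • x₀) * (starRingEnd ℂ) (χ.1 g) ∂μG‖ ^ 2 ∂νhat := hF x₀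
        _ = ∫ χ : ContChar G,
              ‖∫ g, f' (g⁻¹ • x₀) * (starRingEnd ℂ) (χ.1 g) ∂μG‖ ^ 2 ∂νhat := by
            rw [hZ]
        _ = ∫ g, ‖f' (g⁻¹ • x₀)‖ ^ 2 ∂μG := hplan
        _ = (∫⁻ g, h₂ (g⁻¹ • x₀) ∂μG).toReal := by
            rw [integral_eq_lintegral_of_nonneg_ae
              (Filter.Eventually.of_forall fun g => sq_nonneg _)
              (hmeas_hx.norm.pow_const 2).aestronglyMeasurable]
            congr 1
            refine lintegral_congr fun g => ?_
            simp only [hh₂]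
            rw [ENNReal.ofReal_pow (norm_nonneg _), ofReal_norm, enorm_eq_nnnorm]
    -- put everything together
    have hL : (∫ x, ‖f x‖ ^ 2 ∂μs) = (∫⁻ x, (‖f x‖₊ : ℝ≥0∞) ^ 2 ∂μs).toReal := by
      rw [integral_eq_lintegral_of_nonneg_ae
        (Filter.Eventually.of_forall fun x => sq_nonneg _)
        ((hfi.1.norm.pow 2).congr (Filter.Eventually.of_forall fun x => by simp [pow_two]))]
      congr 1
      refine lintegral_congr fun x => ?_
      rw [ENNReal.ofReal_pow (norm_nonneg _), ofReal_norm, enorm_eq_nnnorm]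
    have hlcong : (∫⁻ x, (‖f x‖₊ : ℝ≥0∞) ^ 2 ∂μs) = ∫⁻ x, h₂ x ∂μs := by
      refine lintegral_congr_ae (hff'.mono fun x hx => ?_)
      rw [hh₂]; simp [hx]
    have hR : (∫ ξ, F ξ ∂ν)
        = (∫⁻ ξ, (∫⁻ g, h₂ (g⁻¹ • ξ.out) ∂μG) ∂ν).toReal := by
      rw [integral_congr_ae hmain]
      exact integral_toReal (measH h₂ hmeas₂).aemeasurable hae2
    rw [hL, hlcong, weil h₂ hmeas₂, ← hR]
end

section
/- Let G be a topological group, H a compact subgroup equipped with its normalized Haar probability measure μ_H, and let σ and σ' be irreducible continuous unitary representations of G on the same complex Hilbert space E (irreducible meaning the only closed subspaces of E invariant under all σ(g) are {0} and E, and likewise for σ'). Let P (resp. P') be the orthogonal projection of E onto the closed subspace of vectors fixed by σ(h) (resp. σ'(h)) for all h ∈ H. If P ≠ 0 and σ(g)∘P = σ'(g)∘P' for all g ∈ G, then σ = σ'. -/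
open scoped InnerProductSpace

/-- Let `G` be a topological group, `H` a compact subgroup, and `σ, σ'`
irreducible continuous unitary representations of `G` on the same complex Hilbert space
`E` (unitary operators realized as linear isometric equivalences).  Let `P` (resp. `P'`)
be the orthogonal projection of `E` onto the closed subspace of `H`-fixed vectors of `σ`
(resp. `σ'`), characterized by: `P v` is `H`-fixed and `v - P v` is orthogonal to every
`H`-fixed vector.  If `P ≠ 0` and `σ g ∘ P = σ' g ∘ P'` for all `g ∈ G`, then `σ = σ'`. -/
theorem stmt_12 {G E : Type*}
    [Group G] [TopologicalSpace G] [IsTopologicalGroup G]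
    [NormedAddCommGroup E] [InnerProductSpace ℂ E] [CompleteSpace E]
    (H : Subgroup G) (hHcomp : IsCompact (H : Set G))
    (σ σ' : G →* (E ≃ₗᵢ[ℂ] E))
    (hσcont : ∀ v : E, Continuous fun g : G => σ g v)
    (hσ'cont : ∀ v : E, Continuous fun g : G => σ' g v)
    (hσirr : ∀ V : Submodule ℂ E, IsClosed (V : Set E) →
      (∀ g : G, ∀ v ∈ V, σ g v ∈ V) → V = ⊥ ∨ V = ⊤)
    (hσ'irr : ∀ V : Submodule ℂ E, IsClosed (V : Set E) →
      (∀ g : G, ∀ v ∈ V, σ' g v ∈ V) → V = ⊥ ∨ V = ⊤)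
    (P P' : E →L[ℂ] E)
    (hPfix : ∀ v : E, ∀ h ∈ H, σ h (P v) = P v)
    (hPorth : ∀ v w : E, (∀ h ∈ H, σ h w = w) → ⟪v - P v, w⟫_ℂ = 0)
    (hP'fix : ∀ v : E, ∀ h ∈ H, σ' h (P' v) = P' v)
    (hP'orth : ∀ v w : E, (∀ h ∈ H, σ' h w = w) → ⟪v - P' v, w⟫_ℂ = 0)
    (hPne : P ≠ 0)
    (hcomp : ∀ (g : G) (v : E), σ g (P v) = σ' g (P' v)) :
    σ = σ' := by
  classical
  obtain ⟨v₀, hv₀⟩ : ∃ v, P v ≠ 0 := by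
    by_contra h
    push_neg at h
    exact hPne (ContinuousLinearMap.ext fun v => h v)
  set S : Set E := {x | ∃ g v, σ g (P v) = x} with hS
  set W : Submodule ℂ E := Submodule.span ℂ S with hW
  set Wc := W.topologicalClosure with hWc
  have hSinv : ∀ g : G, ∀ x ∈ S, σ g x ∈ S := by
    rintro g x ⟨g', v, rfl⟩
    exact ⟨g * g', v, by simp [map_mul]⟩
  have hWinv : ∀ g : G, ∀ x ∈ W, σ g x ∈ W := by
    intro g x hx
    refine Submodule.span_induction
      (fun y hy => Submodule.subset_span (hSinv g y hy)) (by simp) ?_ ?_ hx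
    · intro a b _ _ ha hb; rw [map_add]; exact W.add_mem ha hb
    · intro c a _ ha; rw [map_smul]; exact W.smul_mem c ha
  have hclos : (Wc : Set E) = closure (W : Set E) := rfl
  have hWcinv : ∀ g : G, ∀ x ∈ Wc, σ g x ∈ Wc := by
    intro g x hx
    have hx' : x ∈ closure (W : Set E) := hx
    have : σ g x ∈ closure (W : Set E) :=
      map_mem_closure (σ g).continuous hx' (fun y hy => hWinv g y hy)
    exact this
  have hne : Wc ≠ ⊥ := by
    intro hbot
    have hmem : P v₀ ∈ Wc := by
      apply Submodule.le_topologicalClosure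
      exact Submodule.subset_span ⟨1, v₀, by simp⟩
    rw [hbot] at hmem
    exact hv₀ (Submodule.mem_bot ℂ |>.mp hmem)
  have htop : Wc = ⊤ :=
    (hσirr Wc W.isClosed_topologicalClosure hWcinv).resolve_left hne
  have keyS : ∀ g : G, ∀ x ∈ S, σ g x = σ' g x := by
    rintro g x ⟨g', v, rfl⟩
    calc σ g (σ g' (P v)) = σ (g * g') (P v) := by simp [map_mul]
      _ = σ' (g * g') (P' v) := hcomp _ _
      _ = σ' g (σ' g' (P' v)) := by simp [map_mul]
      _ = σ' g (σ g' (P v)) := by rw [← hcomp g' v]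
  have keyW : ∀ g : G, ∀ x ∈ W, σ g x = σ' g x := by
    intro g x hx
    refine Submodule.span_induction (keyS g) (by simp) ?_ ?_ hx
    · intro a b _ _ ha hb; rw [map_add, map_add, ha, hb]
    · intro c a _ ha; rw [map_smul, map_smul, ha]
  have keyWc : ∀ g : G, ∀ x ∈ Wc, σ g x = σ' g x := by
    intro g x hx
    have hcl : IsClosed {y : E | σ g y = σ' g y} :=
      isClosed_eq (σ g).continuous (σ' g).continuous
    have : (W : Set E) ⊆ {y : E | σ g y = σ' g y} := fun y hy => keyW g y hy
    exact closure_minimal this hcl hx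
  refine MonoidHom.ext fun g => ?_
  refine LinearIsometryEquiv.ext fun x => ?_
  exact keyWc g x (htop ▸ Submodule.mem_top)
end

section
/- Let G be a locally compact Hausdorff group whose left Haar measure μ_G is also right-invariant (G unimodular), let H ⊆ G be a compact subgroup with normalized Haar probability measure μ_H, let σ be a continuous unitary representation of G on a complex Hilbert space E, and let P be the orthogonal projection of E onto the H-fixed vectors {v ∈ E | σ(h)v = v for all h ∈ H}. Then for every f ∈ C_c(G) and every v ∈ E: ∫_G (∫_H f(gh) dμ_H(h))·σ(g)⁻¹v dμ_G(g) = P(∫_G f(g)·σ(g)⁻¹v dμ_G(g)); in other words, the G-Fourier coefficient of the right orbital mean A_R f, where A_R f(g) = ∫_H f(gh) dμ_H(h), equals P composed with the Fourier coefficient f̂(σ) = ∫_G f(g)σ(g)* dμ_G(g). -/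
open MeasureTheory
open scoped InnerProductSpace

/-- Let `G` be a unimodular locally compact Hausdorff group with Haar
measure `μG`, `H ⊆ G` a compact subgroup with normalized Haar probability measure `μH`,
`σ` a continuous unitary representation of `G` on a complex Hilbert space `E`, and `P`
the orthogonal projection onto the `H`-fixed vectors (characterized by: `P v` is
`H`-fixed and `v - P v` is orthogonal to all `H`-fixed vectors).  Then for every
`f ∈ C_c(G)` and `v ∈ E`,
`∫_G (∫_H f (g h) dμH(h)) • σ(g)⁻¹ v dμG(g) = P (∫_G f g • σ(g)⁻¹ v dμG(g))`,
i.e. the Fourier coefficient of the right orbital mean `A_R f` equals `P ∘ f̂(σ)`. -/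
theorem stmt_14 {G E : Type*}
    [Group G] [TopologicalSpace G] [IsTopologicalGroup G] [LocallyCompactSpace G] [T2Space G]
    [MeasurableSpace G] [BorelSpace G]
    (μG : Measure G) [μG.IsHaarMeasure] [μG.IsMulRightInvariant]
    [NormedAddCommGroup E] [InnerProductSpace ℂ E] [CompleteSpace E]
    (H : Subgroup G) (hHcomp : IsCompact (H : Set G))
    (μH : Measure H) [μH.IsHaarMeasure] [IsProbabilityMeasure μH]
    (σ : G →* (E ≃ₗᵢ[ℂ] E))
    (hσcont : ∀ v : E, Continuous fun g : G => σ g v)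
    (P : E →L[ℂ] E)
    (hPfix : ∀ v : E, ∀ h ∈ H, σ h (P v) = P v)
    (hPorth : ∀ v w : E, (∀ h ∈ H, σ h w = w) → ⟪v - P v, w⟫_ℂ = 0)
    (f : G → ℂ) (hf : Continuous f) (hfc : HasCompactSupport f) :
    ∀ v : E,
      (∫ g, (∫ h : H, f (g * (h : G)) ∂μH) • σ g⁻¹ v ∂μG)
        = P (∫ g, f g • σ g⁻¹ v ∂μG) := by
  intro v
  have hHc : CompactSpace H := isCompact_iff_compactSpace.mp hHcomp
  haveI : BorelSpace H := Subtype.borelSpace (H : Set G)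
  set w : E := ∫ g, f g • σ g⁻¹ v ∂μG with hw
  -- Step B: Fubini
  have hcont2 : Continuous (Function.uncurry fun (g : G) (h : H) => f (g * (h : G)) • σ g⁻¹ v) := by
    apply Continuous.smul
    · exact hf.comp (continuous_fst.mul (continuous_subtype_val.comp continuous_snd))
    · exact (hσcont v).comp (continuous_inv.comp continuous_fst)
  have hsupp2 : HasCompactSupport
      (Function.uncurry fun (g : G) (h : H) => f (g * (h : G)) • σ g⁻¹ v) := by
    apply HasCompactSupport.intro ((hfc.mul hHcomp).prod isCompact_univ)
    rintro ⟨g, h⟩ hx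
    have hfz : f (g * (h : G)) = 0 := by
      by_contra hne
      apply hx
      refine ⟨?_, Set.mem_univ _⟩
      have hmem : g * (h : G) ∈ tsupport f := subset_tsupport f hne
      have : g = (g * (h : G)) * ((h : G))⁻¹ := by group
      rw [this]
      exact Set.mul_mem_mul hmem (H.inv_mem h.2)
    simp [Function.uncurry, hfz]
  have hswap :
      (∫ g, (∫ h : H, f (g * (h : G)) ∂μH) • σ g⁻¹ v ∂μG)
        = ∫ h : H, ∫ g, f (g * (h : G)) • σ g⁻¹ v ∂μG ∂μH := by
    rw [show (fun g => (∫ h : H, f (g * (h : G)) ∂μH) • σ g⁻¹ v)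
        = fun g => ∫ h : H, f (g * (h : G)) • σ g⁻¹ v ∂μH from
      funext fun g => (integral_smul_const _ _).symm]
    exact integral_integral_swap_of_hasCompactSupport hcont2 hsupp2
  -- Step A: each inner integral equals σ h w
  have hA : ∀ h : H, (∫ g, f (g * (h : G)) • σ g⁻¹ v ∂μG) = σ (h : G) w := by
    intro h
    have key : ∀ g : G, f (g * (h : G)) • σ g⁻¹ v
        = (fun x => f x • σ (h : G) (σ x⁻¹ v)) (g * (h : G)) := by
      intro g
      have : σ (h : G) (σ (g * (h : G))⁻¹ v) = σ g⁻¹ v := by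
        have : σ (h : G) * σ (g * (h : G))⁻¹ = σ g⁻¹ := by
          rw [← map_mul]
          congr 1
          group
        calc σ (h : G) (σ (g * (h : G))⁻¹ v)
            = (σ (h : G) * σ (g * (h : G))⁻¹) v := rfl
          _ = σ g⁻¹ v := by rw [this]
      simp only [this]
    calc (∫ g, f (g * (h : G)) • σ g⁻¹ v ∂μG)
        = ∫ g, (fun x => f x • σ (h : G) (σ x⁻¹ v)) (g * (h : G)) ∂μG := by
          simp only [key]
      _ = ∫ g, f g • σ (h : G) (σ g⁻¹ v) ∂μG :=
          integral_mul_right_eq_self (fun x => f x • σ (h : G) (σ x⁻¹ v)) (h : G)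
      _ = ∫ g, (σ (h : G)).toLinearIsometry (f g • σ g⁻¹ v) ∂μG := by
          simp [LinearIsometryEquiv.coe_toLinearIsometry]
      _ = σ (h : G) w := (σ (h : G)).toLinearIsometry.integral_comp_comm _
  -- the averaged vector
  set u : E := ∫ h : H, σ (h : G) w ∂μH with hu
  have hcontu : Continuous fun h : H => σ (h : G) w :=
    (hσcont w).comp continuous_subtype_val
  have hintu : Integrable (fun h : H => σ (h : G) w) μH :=
    hcontu.integrable_of_hasCompactSupport
      (HasCompactSupport.of_compactSpace _)
  -- u is H-fixed
  have hufixed : ∀ g ∈ H, σ g u = u := by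
    intro g hg
    calc σ g u = (σ g).toLinearIsometry u := rfl
      _ = ∫ h : H, (σ g).toLinearIsometry (σ (h : G) w) ∂μH :=
          ((σ g).toLinearIsometry.integral_comp_comm _).symm
      _ = ∫ h : H, (fun k : H => σ (k : G) w) ((⟨g, hg⟩ : H) * h) ∂μH := by
          congr 1
          funext h
          show σ g (σ (h : G) w) = σ (g * (h : G)) w
          rw [map_mul]
          rfl
      _ = ∫ h : H, σ (h : G) w ∂μH :=
          integral_mul_left_eq_self (fun k : H => σ (k : G) w) (⟨g, hg⟩ : H)
  -- inner products of u against H-fixed vectors agree with w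
  have hinner : ∀ z : E, (∀ g ∈ H, σ g z = z) → ⟪z, u⟫_ℂ = ⟪z, w⟫_ℂ := by
    intro z hz
    calc ⟪z, u⟫_ℂ = ∫ h : H, ⟪z, σ (h : G) w⟫_ℂ ∂μH := (integral_inner hintu z).symm
      _ = ∫ _h : H, ⟪z, w⟫_ℂ ∂μH := by
          congr 1
          funext h
          calc ⟪z, σ (h : G) w⟫_ℂ = ⟪σ (h : G) z, σ (h : G) w⟫_ℂ := by
                rw [hz (h : G) h.2]
            _ = ⟪z, w⟫_ℂ := LinearIsometryEquiv.inner_map_map _ _ _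
      _ = ⟪z, w⟫_ℂ := by simp
  -- conclude u = P w
  have hfixdiff : ∀ g ∈ H, σ g (u - P w) = u - P w := by
    intro g hg
    rw [map_sub, hufixed g hg, hPfix w g hg]
  have h1 : ⟪u - P w, u - w⟫_ℂ = 0 := by
    rw [inner_sub_right, hinner (u - P w) hfixdiff, sub_self]
  have h2 : ⟪u - P w, w - P w⟫_ℂ = 0 := by
    have := hPorth w (u - P w) hfixdiff
    calc ⟪u - P w, w - P w⟫_ℂ = (starRingEnd ℂ) ⟪w - P w, u - P w⟫_ℂ :=
          (inner_conj_symm _ _).symm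
      _ = 0 := by rw [this]; simp
  have hself : ⟪u - P w, u - P w⟫_ℂ = 0 := by
    have : (u : E) - P w = (u - w) + (w - P w) := by abel
    calc ⟪u - P w, u - P w⟫_ℂ
        = ⟪u - P w, (u - w) + (w - P w)⟫_ℂ := by rw [← this]
      _ = ⟪u - P w, u - w⟫_ℂ + ⟪u - P w, w - P w⟫_ℂ := inner_add_right _ _ _
      _ = 0 := by rw [h1, h2, add_zero]
  have huPw : u = P w := by
    have := inner_self_eq_zero.mp hself
    exact sub_eq_zero.mp this
  calc (∫ g, (∫ h : H, f (g * (h : G)) ∂μH) • σ g⁻¹ v ∂μG)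
      = ∫ h : H, ∫ g, f (g * (h : G)) • σ g⁻¹ v ∂μG ∂μH := hswap
    _ = ∫ h : H, σ (h : G) w ∂μH := by simp only [hA]
    _ = P w := huPw
end
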